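/- Let X be a compact Hausdorff space. For every possibility capacity ν on X (satisfying ν(∪_t A_t) = sup_t ν(A_t) for any family of closed sets with closed union) and every closed nonempty F ⊆ X, we have ν(F) = max{ν({x}) : x ∈ F}; in particular ν is completely determined by its density [ν] : x ↦ ν({x}), which is an upper semicontinuous function with max [ν] = 1. Conversely, every upper semicontinuous f : X → [0,1] with max f = 1 defines a possibility capacity via F ↦ max{f(x) : x ∈ F}. -/

import Mathlib

open Set

/-- A continuous triangular norm on `[0,1]`, modeled as a binary operation on `ℝ`
restricted to the unit interval. -/
structure Tnorm where
  op : ℝ → ℝ → ℝ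
  mem' : ∀ a b : ℝ, a ∈ Set.Icc (0:ℝ) 1 → b ∈ Set.Icc (0:ℝ) 1 → op a b ∈ Set.Icc (0:ℝ) 1
  comm' : ∀ a b : ℝ, op a b = op b a
  assoc' : ∀ a b c : ℝ, op (op a b) c = op a (op b c)
  mono' : ∀ a b c d : ℝ, a ≤ b → c ≤ d → op a c ≤ op b d
  one_id' : ∀ a ∈ Set.Icc (0:ℝ) 1, op a 1 = a
  cont' : Continuous fun p : ℝ × ℝ => op p.1 p.2

/-- An upper-semicontinuous capacity on a topological space `X`. -/
structure Capacity (X : Type*) [TopologicalSpace X] where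
  toFun : Set X → ℝ
  nonneg' : ∀ A : Set X, 0 ≤ toFun A
  le_one' : ∀ A : Set X, toFun A ≤ 1
  empty' : toFun (∅ : Set X) = 0
  univ' : toFun (Set.univ : Set X) = 1
  mono' : ∀ A B : Set X, A ⊆ B → toFun A ≤ toFun B
  usc' : ∀ F : Set X, IsClosed F → ∀ a : ℝ, toFun F < a →
    ∃ O : Set X, IsOpen O ∧ F ⊆ O ∧ ∀ B : Set X, B ⊆ O → IsCompact B → toFun B < a

/-- Two functions are comonotone (equiordered). -/
def Comonotone {X : Type*} (φ ψ : X → ℝ) : Prop :=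
  ∀ x₁ x₂ : X, 0 ≤ (φ x₁ - φ x₂) * (ψ x₁ - ψ x₂)

/-- A possibility capacity: maxitive on closed sets. -/
def IsPossibility {X : Type*} [TopologicalSpace X] (ν : Capacity X) : Prop :=
  ∀ A B : Set X, IsClosed A → IsClosed B →
    ν.toFun (A ∪ B) = max (ν.toFun A) (ν.toFun B)

/-- Possibility capacities attain their value on closed sets at a point, are determined by
their (upper semicontinuous, normalized) density, and conversely every upper semicontinuous
`f : X → [0,1]` with `max f = 1` defines a possibility capacity `F ↦ max_{x∈F} f(x)`. -/
lemma usc_exists_max {X : Type*} [TopologicalSpace X] {f : X → ℝ}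
    (hf : UpperSemicontinuous f) {s : Set X} (hs : IsCompact s) (hne : s.Nonempty) :
    ∃ x ∈ s, ∀ y ∈ s, f y ≤ f x := by
  by_contra h
  push_neg at h
  have hopen : ∀ i ∈ s, IsOpen (f ⁻¹' Iio (f i)) := fun i _ =>
    upperSemicontinuous_iff_isOpen_preimage.mp hf _
  have hcov : s ⊆ ⋃ i ∈ s, f ⁻¹' Iio (f i) := by
    intro x hx
    obtain ⟨y, hy, hxy⟩ := h x hx
    exact mem_biUnion hy hxy
  obtain ⟨t, hts, htfin, hcov'⟩ := hs.elim_finite_subcover_image hopen hcov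
  have htne : t.Nonempty := by
    rcases hne with ⟨x, hx⟩
    rcases mem_iUnion₂.mp (hcov' hx) with ⟨i, hi, _⟩
    exact ⟨i, hi⟩
  obtain ⟨y₀, hy₀t, hmax⟩ := htfin.toFinset.exists_max_image f (by simpa using htne)
  simp only [Set.Finite.mem_toFinset] at hy₀t hmax
  rcases mem_iUnion₂.mp (hcov' (hts hy₀t)) with ⟨i, hit, hlt⟩
  exact absurd (hmax i hit) (not_le.mpr hlt)

lemma pos_rep {X : Type*} [TopologicalSpace X] [T2Space X] (ν : Capacity X)
    (hν : ∀ 𝒜 : Set (Set X), (∀ A ∈ 𝒜, IsClosed A) → IsClosed (⋃₀ 𝒜) →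
        ν.toFun (⋃₀ 𝒜) = sSup (ν.toFun '' 𝒜))
    (F : Set X) (hF : IsClosed F) :
    ν.toFun F = sSup ((fun x => ν.toFun {x}) '' F) := by
  have hU : ⋃₀ ((fun x => ({x} : Set X)) '' F) = F := by
    rw [Set.sUnion_image]
    exact Set.biUnion_of_singleton F
  have h1 := hν ((fun x => ({x} : Set X)) '' F)
    (by rintro A ⟨x, hx, rfl⟩; exact isClosed_singleton)
    (by rw [hU]; exact hF)
  rw [hU, Set.image_image] at h1
  exact h1

theorem possibility_density_theorem {X : Type*} [TopologicalSpace X] [CompactSpace X]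
    [T2Space X] :
    (∀ ν : Capacity X,
      (∀ 𝒜 : Set (Set X), (∀ A ∈ 𝒜, IsClosed A) → IsClosed (⋃₀ 𝒜) →
        ν.toFun (⋃₀ 𝒜) = sSup (ν.toFun '' 𝒜)) →
      ((∀ F : Set X, IsClosed F → F.Nonempty →
          ∃ x ∈ F, ν.toFun {x} = ν.toFun F ∧ ∀ y ∈ F, ν.toFun {y} ≤ ν.toFun F) ∧
       UpperSemicontinuous (fun x : X => ν.toFun {x}) ∧
       (∃ x : X, ν.toFun {x} = 1) ∧
       (∀ ν' : Capacity X,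
          (∀ 𝒜 : Set (Set X), (∀ A ∈ 𝒜, IsClosed A) → IsClosed (⋃₀ 𝒜) →
            ν'.toFun (⋃₀ 𝒜) = sSup (ν'.toFun '' 𝒜)) →
          (∀ x : X, ν'.toFun {x} = ν.toFun {x}) →
          ∀ F : Set X, IsClosed F → ν'.toFun F = ν.toFun F))) ∧
    (∀ f : X → ℝ, UpperSemicontinuous f → (∀ x, f x ∈ Set.Icc (0:ℝ) 1) → (∃ x, f x = 1) →
      ∃ ν : Capacity X, IsPossibility ν ∧
        (∀ F : Set X, IsClosed F → F.Nonempty → ν.toFun F = sSup (f '' F)) ∧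
        (∀ 𝒜 : Set (Set X), (∀ A ∈ 𝒜, IsClosed A) → IsClosed (⋃₀ 𝒜) →
          ν.toFun (⋃₀ 𝒜) = sSup (ν.toFun '' 𝒜))) := by
  
  constructor
  · intro ν hν
    have hX : Nonempty X := by
      by_contra h
      have he : (Set.univ : Set X) = ∅ := by
        simp [Set.univ_eq_empty_iff, not_nonempty_iff.mp h]
      have h1 := ν.univ'
      rw [he, ν.empty'] at h1
      norm_num at h1
    have husc : UpperSemicontinuous (fun x : X => ν.toFun {x}) := by
      intro x a ha
      obtain ⟨O, hOopen, hOsub, hB⟩ := ν.usc' {x} isClosed_singleton a ha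
      filter_upwards [hOopen.mem_nhds (hOsub rfl)] with y hy
      exact hB {y} (singleton_subset_iff.mpr hy) isCompact_singleton
    have hatt : ∀ F : Set X, IsClosed F → F.Nonempty →
        ∃ x ∈ F, ν.toFun {x} = ν.toFun F ∧ ∀ y ∈ F, ν.toFun {y} ≤ ν.toFun F := by
      intro F hF hne
      obtain ⟨x, hxF, hmax⟩ := usc_exists_max husc hF.isCompact hne
      refine ⟨x, hxF, ?_, fun y hy => ν.mono' _ _ (singleton_subset_iff.mpr hy)⟩
      rw [pos_rep ν hν F hF]
      exact le_antisymm
        (le_csSup ⟨ν.toFun {x}, by rintro _ ⟨y, hy, rfl⟩; exact hmax y hy⟩ ⟨x, hxF, rfl⟩)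
        (csSup_le (hne.image _) (by rintro _ ⟨y, hy, rfl⟩; exact hmax y hy))
    refine ⟨hatt, husc, ?_, ?_⟩
    · obtain ⟨x, -, hx, -⟩ := hatt Set.univ isClosed_univ Set.univ_nonempty
      exact ⟨x, by rw [hx, ν.univ']⟩
    · intro ν' hν' hsame F hF
      rw [pos_rep ν' hν' F hF, pos_rep ν hν F hF]
      congr 1
      exact congrArg (· '' F) (funext hsame)
  · rintro f hf hf01 ⟨x₀, hx₀⟩
    have hbdd : ∀ A : Set X, BddAbove (f '' A) :=
      fun A => ⟨1, by rintro _ ⟨x, -, rfl⟩; exact (hf01 x).2⟩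
    have hnn : ∀ A : Set X, 0 ≤ sSup (f '' A) := by
      intro A
      rcases A.eq_empty_or_nonempty with rfl | ⟨a, ha⟩
      · simp [Real.sSup_empty]
      · exact (hf01 a).1.trans (le_csSup (hbdd A) ⟨a, ha, rfl⟩)
    have hm : ∀ A B : Set X, A ⊆ B → sSup (f '' A) ≤ sSup (f '' B) := by
      intro A B hAB
      rcases A.eq_empty_or_nonempty with rfl | hAne
      · simpa [Real.sSup_empty] using hnn B
      · exact csSup_le_csSup (hbdd B) (hAne.image f) (Set.image_mono hAB)
    refine ⟨{ toFun := fun A => sSup (f '' A)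
              nonneg' := hnn
              le_one' := fun A => Real.sSup_le (by rintro _ ⟨x, -, rfl⟩; exact (hf01 x).2) zero_le_one
              empty' := by simp [Real.sSup_empty]
              univ' := le_antisymm
                (Real.sSup_le (by rintro _ ⟨x, -, rfl⟩; exact (hf01 x).2) zero_le_one)
                (by rw [← hx₀]; exact le_csSup (hbdd _) ⟨x₀, Set.mem_univ _, rfl⟩)
              mono' := hm
              usc' := by
                intro F hF a ha
                refine ⟨f ⁻¹' Iio a, upperSemicontinuous_iff_isOpen_preimage.mp hf a, ?_, ?_⟩
                · intro x hx
                  exact lt_of_le_of_lt (le_csSup (hbdd F) ⟨x, hx, rfl⟩) ha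
                · intro B hBO hBc
                  rcases B.eq_empty_or_nonempty with rfl | hBne
                  · simpa [Real.sSup_empty] using lt_of_le_of_lt (hnn F) ha
                  · obtain ⟨b, hbB, hbmax⟩ := usc_exists_max hf hBc hBne
                    exact lt_of_le_of_lt
                      (csSup_le (hBne.image f) (by rintro _ ⟨y, hy, rfl⟩; exact hbmax y hy))
                      (hBO hbB) }, ?_, fun F _ _ => rfl, ?_⟩
    · intro A B _ _
      refine le_antisymm (Real.sSup_le ?_ (le_max_of_le_left (hnn A)))
        (max_le (hm _ _ Set.subset_union_left) (hm _ _ Set.subset_union_right))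
      rintro _ ⟨x, hx | hx, rfl⟩
      · exact le_max_of_le_left (le_csSup (hbdd A) ⟨x, hx, rfl⟩)
      · exact le_max_of_le_right (le_csSup (hbdd B) ⟨x, hx, rfl⟩)
    · intro 𝒜 _ _
      rcases 𝒜.eq_empty_or_nonempty with rfl | ⟨A₀, hA₀⟩
      · simp [Real.sSup_empty]
      · have hbdd2 : BddAbove ((fun A => sSup (f '' A)) '' 𝒜) :=
          ⟨1, by rintro _ ⟨A, -, rfl⟩; exact Real.sSup_le (by rintro _ ⟨x, -, rfl⟩; exact (hf01 x).2) zero_le_one⟩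
        refine le_antisymm (Real.sSup_le ?_ (le_trans (hnn A₀) (le_csSup hbdd2 ⟨A₀, hA₀, rfl⟩))) ?_
        · rintro _ ⟨x, hx, rfl⟩
          obtain ⟨A, hA, hxA⟩ := hx
          exact le_trans (le_csSup (hbdd A) ⟨x, hxA, rfl⟩) (le_csSup hbdd2 ⟨A, hA, rfl⟩)
        · exact Real.sSup_le (by rintro _ ⟨A, hA, rfl⟩; exact hm _ _ (Set.subset_sUnion_of_mem hA)) (hnn _)
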